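/- arXiv:1803.07884 — 2 statements merged into one kernel-verified Lean document; each statement's English description precedes it below -/
import Mathlib

section
/- Improved reduction bound: Let (A,T) be an abstract space with skeleton Γ and V ∈ D^ᾱ(T;Γ), and suppose there exist β* ∈ A and constants M*^b, M^b ≥ 0 such that |V(x).v| ≤ M*^b N^{⟨β*⟩}‖Γ_{β*}(x)v‖_{T_{β*}} + M^b Σ_{β∈A, β≠β*} N^{⟨β⟩}‖Γ_β(x)v‖_{T_β} for all x ∈ ℝ² and v ∈ T. Then for every η with β* < η and β̲ < η ≤ β̄: [C_ηV]_{D^{ᾱ∧η}(T;Γ)} ≤ [V]_{D^ᾱ(T;Γ)} + (|A|−1) N^{m(η)} ‖Γ‖_sk M^b, where m(η) := min{⟨β⟩ : β ∈ A, β ≥ η}. -/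
open scoped BigOperators
open MeasureTheory

noncomputable section

/-- The parabolic metric `d(x,y) = |x₁−y₁| + √|x₂−y₂|` on `ℝ²`. -/
def pdist (x y : ℝ × ℝ) : ℝ := |x.1 - y.1| + Real.sqrt |x.2 - y.2|

/-- The kernel `ψ_T`, the inverse Fourier transform of `exp(−T(k₁⁴+k₂²))`. -/
def psiK (T : ℝ) (x : ℝ × ℝ) : ℝ :=
  ∫ k : ℝ × ℝ, Real.exp (-(T * (k.1 ^ 4 + k.2 ^ 2))) *
    Real.cos (2 * Real.pi * (k.1 * x.1 + k.2 * x.2))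

/-- Mollification at scale `t` by convolution with `ψ_t`. -/
def mollify {E : Type*} [NormedAddCommGroup E] [NormedSpace ℝ E]
    (t : ℝ) (g : ℝ × ℝ → E) (x : ℝ × ℝ) : E :=
  ∫ y : ℝ × ℝ, psiK t (x - y) • g y

/-- A (vector valued) tempered distribution represented through its semigroup
mollifications `g_T`, with the semigroup property `(g_T)_t = g_{T+t}`. -/
structure MollDistrib (E : Type*) [NormedAddCommGroup E] [NormedSpace ℝ E] where
  app : ℝ → ℝ × ℝ → E
  cont : ∀ T : ℝ, 0 < T → Continuous (app T)
  semigroup : ∀ T : ℝ, 0 < T → ∀ t : ℝ, 0 < t → app (T + t) = mollify t (app T)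

/-- The data of a skeleton on the abstract space `(A, T = ⊕_{β∈A} T_β)`:
a triangular, strongly continuous family of operators. -/
structure PreSkeleton (A : Finset ℝ) (Tb : A → Type*)
    [∀ β, NormedAddCommGroup (Tb β)] [∀ β, NormedSpace ℝ (Tb β)] where
  mat : ℝ × ℝ → ∀ β γ : A, Tb γ →L[ℝ] Tb β
  cont : ∀ (β γ : A) (v : Tb γ), Continuous fun x => mat x β γ v
  diag : ∀ (x : ℝ × ℝ) (β : A), mat x β β = ContinuousLinearMap.id ℝ (Tb β)
  upper : ∀ (x : ℝ × ℝ) (β γ : A), (β : ℝ) < (γ : ℝ) → mat x β γ = 0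

namespace PreSkeleton

variable {A : Finset ℝ} {Tb : A → Type*}
  [∀ β, NormedAddCommGroup (Tb β)] [∀ β, NormedSpace ℝ (Tb β)]

/-- `Γ_β(x)v = v_β + ∑_{γ<β} Γ_β^γ(x) v_γ`. -/
def apply (S : PreSkeleton A Tb) (x : ℝ × ℝ) (β : A) (v : ∀ γ : A, Tb γ) : Tb β :=
  ∑ γ : A, S.mat x β γ (v γ)

/-- The continuity property (ssss2) of a skeleton, with constant `C`. -/
def IsSkelBound (S : PreSkeleton A Tb) (C : ℝ) : Prop :=
  ∀ (β : A) (v : ∀ γ : A, Tb γ) (x y : ℝ × ℝ), pdist y x ≤ 1 →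
    ‖S.apply y β v - S.apply x β v‖ ≤
      C * ∑ γ : A, (if (γ : ℝ) < (β : ℝ)
        then pdist y x ^ ((β : ℝ) - (γ : ℝ)) * ‖S.apply x γ v‖ else 0)

/-- `Γ` is a skeleton: the continuity property holds for some `C ≥ 0`. -/
def IsSkeleton (S : PreSkeleton A Tb) : Prop := ∃ C, 0 ≤ C ∧ S.IsSkelBound C

/-- `‖Γ‖_sk`, the least admissible constant in the continuity property. -/
def skelNorm (S : PreSkeleton A Tb) : ℝ := sInf {C | 0 ≤ C ∧ S.IsSkelBound C}

/-- Form boundedness of `V : ℝ² → T*` with constants `(M_β^b)`. -/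
def FormBounded (S : PreSkeleton A Tb) (V : ℝ × ℝ → (∀ γ : A, Tb γ) → ℝ)
    (Mb : A → ℝ) : Prop :=
  ∀ x v, |V x v| ≤ ∑ β : A, Mb β * ‖S.apply x β v‖

/-- Form continuity of order `ord` with constant `Mc`. -/
def FormContinuous (S : PreSkeleton A Tb) (ord : ℝ)
    (V : ℝ × ℝ → (∀ γ : A, Tb γ) → ℝ) (Mc : ℝ) : Prop :=
  ∀ x y v, pdist y x ≤ 1 →
    |V y v - V x v| ≤
      Mc * ∑ β : A, pdist y x ^ max (ord - (β : ℝ)) 0 * ‖S.apply x β v‖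

/-- `V` is a modelled distribution of order `ord` relative to the skeleton `S`. -/
def IsModelled (S : PreSkeleton A Tb) (ord : ℝ)
    (V : ℝ × ℝ → (∀ γ : A, Tb γ) → ℝ) : Prop :=
  (∀ x, IsLinearMap ℝ (V x)) ∧ (∀ v, Continuous fun x => V x v) ∧
    (∃ Mb : A → ℝ, (∀ β, 0 ≤ Mb β) ∧ S.FormBounded V Mb) ∧
    (∃ Mc : ℝ, 0 ≤ Mc ∧ S.FormContinuous ord V Mc)

/-- The seminorm `[V]_{D^{ord}(T;Γ)}`: least form-continuity constant. -/
def ctyNorm (S : PreSkeleton A Tb) (ord : ℝ)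
    (V : ℝ × ℝ → (∀ γ : A, Tb γ) → ℝ) : ℝ :=
  sInf {Mc | 0 ≤ Mc ∧ S.FormContinuous ord V Mc}

/-- The norm `‖V‖_{T;Γ}`: least `M` such that the constants `M·N^{⟨β⟩}` are
admissible for form boundedness. -/
def bdNorm (S : PreSkeleton A Tb) (N : ℝ) (exps : A → ℝ)
    (V : ℝ × ℝ → (∀ γ : A, Tb γ) → ℝ) : ℝ :=
  sInf {M | 0 ≤ M ∧ S.FormBounded V fun β => M * N ^ exps β}

/-- One step `(id − Γ_b)` of the reduction procedure. -/
def cutStep (S : PreSkeleton A Tb) (x : ℝ × ℝ) (b : ℝ)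
    (v : ∀ γ : A, Tb γ) : ∀ γ : A, Tb γ :=
  fun γ => v γ - if (γ : ℝ) = b then S.apply x γ v else 0

/-- The reduction of a vector: all levels `≥ η` are cut, in increasing order. -/
def cutVec (S : PreSkeleton A Tb) (x : ℝ × ℝ) (η : ℝ)
    (v : ∀ γ : A, Tb γ) : ∀ γ : A, Tb γ :=
  ((A.filter fun b => η ≤ b).sort (· ≤ ·)).foldl (fun w b => S.cutStep x b w) v

/-- The reduction `C_η V` of a modelled distribution. -/
def cutForm (S : PreSkeleton A Tb) (η : ℝ)
    (V : ℝ × ℝ → (∀ γ : A, Tb γ) → ℝ) : ℝ × ℝ → (∀ γ : A, Tb γ) → ℝ :=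
  fun x v => V x (S.cutVec x η v)

end PreSkeleton

/-- `m(η) = min{⟨β⟩ : β ∈ A, β ≥ η}`. -/
def minExpFrom (A : Finset ℝ) (exps : A → ℝ) (η : ℝ) : ℝ :=
  sInf {r | ∃ β : A, η ≤ (β : ℝ) ∧ r = exps β}


namespace PreSkeleton

variable {A : Finset ℝ} {Tb : A → Type*}
  [∀ β, NormedAddCommGroup (Tb β)] [∀ β, NormedSpace ℝ (Tb β)]

lemma apply_sub' (S : PreSkeleton A Tb) (x : ℝ × ℝ) (β : A) (v w : ∀ γ : A, Tb γ) :
    S.apply x β (v - w) = S.apply x β v - S.apply x β w := by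
  simp only [apply, Pi.sub_apply, map_sub, Finset.sum_sub_distrib]

lemma step_apply (S : PreSkeleton A Tb) (x : ℝ × ℝ) (b : ℝ) (β : A) (w : ∀ γ : A, Tb γ) :
    S.apply x β (S.cutStep x b w) =
      S.apply x β w - ∑ γ : A, S.mat x β γ (if (γ:ℝ) = b then S.apply x γ w else 0) := by
  simp only [apply, cutStep, map_sub, Finset.sum_sub_distrib]

lemma step_lt (S : PreSkeleton A Tb) (x : ℝ × ℝ) {b : ℝ} {β : A} (h : (β:ℝ) < b)
    (w : ∀ γ : A, Tb γ) :
    S.apply x β (S.cutStep x b w) = S.apply x β w := by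
  rw [S.step_apply]
  have h0 : ∀ γ : A, γ ∈ Finset.univ →
      S.mat x β γ (if (γ:ℝ) = b then S.apply x γ w else 0) = 0 := by
    intro γ _
    by_cases hg : (γ:ℝ) = b
    · rw [if_pos hg, S.upper x β γ (by rw [hg]; exact h)]; simp
    · rw [if_neg hg, map_zero]
  rw [Finset.sum_eq_zero h0, sub_zero]

lemma step_self (S : PreSkeleton A Tb) (x : ℝ × ℝ) (β : A) (w : ∀ γ : A, Tb γ) :
    S.apply x β (S.cutStep x (β:ℝ) w) = 0 := by
  rw [S.step_apply]
  have h0 : (∑ γ : A, S.mat x β γ (if (γ:ℝ) = (β:ℝ) then S.apply x γ w else 0))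
      = S.apply x β w := by
    rw [Finset.sum_eq_single β]
    · rw [if_pos rfl, S.diag]; rfl
    · intro γ _ hγ
      rw [if_neg (fun hc => hγ (Subtype.ext hc)), map_zero]
    · intro h; exact absurd (Finset.mem_univ β) h
  rw [h0, sub_self]

lemma fold_lt (S : PreSkeleton A Tb) (x : ℝ × ℝ) {β : A} (L : List ℝ) :
    ∀ (w : ∀ γ : A, Tb γ), (∀ b ∈ L, (β:ℝ) < b) →
      S.apply x β (L.foldl (fun w b => S.cutStep x b w) w) = S.apply x β w := by
  induction L with
  | nil => intro w _; rfl
  | cons b L ih =>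
      intro w h
      rw [List.foldl_cons, ih _ (fun b' hb' => h b' (List.mem_cons_of_mem _ hb')),
        S.step_lt x (h b List.mem_cons_self) w]

lemma fold_zero (S : PreSkeleton A Tb) (x : ℝ × ℝ) (L : List ℝ) :
    L.Pairwise (· ≤ ·) → L.Nodup → ∀ (w : ∀ γ : A, Tb γ) (β : A), (β:ℝ) ∈ L →
      S.apply x β (L.foldl (fun w b => S.cutStep x b w) w) = 0 := by
  induction L with
  | nil => intro _ _ _ _ h; exact absurd h List.not_mem_nil
  | cons b L ih =>
      intro hsort hnodup w β hmem
      rw [List.foldl_cons]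
      rcases List.mem_cons.mp hmem with hb | hb
      · have hlt : ∀ b' ∈ L, (β:ℝ) < b' := by
          intro b' hb'
          have h1 : b ≤ b' := (List.pairwise_cons.mp hsort).1 b' hb'
          have h2 : b ≠ b' := fun hc => (List.nodup_cons.mp hnodup).1 (by rw [hc]; exact hb')
          rw [hb]; exact lt_of_le_of_ne h1 h2
        rw [S.fold_lt x L _ hlt, ← hb, S.step_self]
      · exact ih (List.pairwise_cons.mp hsort).2 (List.nodup_cons.mp hnodup).2 _ β hb

lemma fold_comp (S : PreSkeleton A Tb) (x : ℝ × ℝ) {γ : A} (L : List ℝ) :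
    ∀ (w : ∀ δ : A, Tb δ), (∀ b ∈ L, (γ:ℝ) ≠ b) →
      (L.foldl (fun w b => S.cutStep x b w) w) γ = w γ := by
  induction L with
  | nil => intro w _; rfl
  | cons b L ih =>
      intro w h
      rw [List.foldl_cons, ih _ (fun b' hb' => h b' (List.mem_cons_of_mem _ hb'))]
      simp [cutStep, h b List.mem_cons_self]

lemma apply_congr (S : PreSkeleton A Tb) (x : ℝ × ℝ) (β : A) {v w : ∀ γ : A, Tb γ}
    (h : ∀ γ : A, (γ:ℝ) ≤ (β:ℝ) → w γ = v γ) :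
    S.apply x β w = S.apply x β v := by
  unfold apply
  refine Finset.sum_congr rfl (fun γ _ => ?_)
  by_cases hg : (γ:ℝ) ≤ (β:ℝ)
  · rw [h γ hg]
  · rw [S.upper x β γ (lt_of_not_ge hg)]; simp

lemma cutVec_comp (S : PreSkeleton A Tb) (x : ℝ × ℝ) (η : ℝ) (v : ∀ γ : A, Tb γ)
    {γ : A} (h : (γ:ℝ) < η) :
    S.cutVec x η v γ = v γ := by
  refine S.fold_comp x _ v (fun b hb => ?_)
  have hb' : η ≤ b := (Finset.mem_filter.mp ((Finset.mem_sort _).mp hb)).2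
  exact ne_of_lt (lt_of_lt_of_le h hb')

lemma apply_cutVec_lt (S : PreSkeleton A Tb) (x z : ℝ × ℝ) (η : ℝ) (v : ∀ γ : A, Tb γ)
    {β : A} (h : (β:ℝ) < η) :
    S.apply z β (S.cutVec x η v) = S.apply z β v :=
  S.apply_congr z β (fun γ hγ => S.cutVec_comp x η v (lt_of_le_of_lt hγ h))

lemma apply_cutVec_ge (S : PreSkeleton A Tb) (x : ℝ × ℝ) (η : ℝ) (v : ∀ γ : A, Tb γ)
    {β : A} (h : η ≤ (β:ℝ)) :
    S.apply x β (S.cutVec x η v) = 0 := by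
  refine S.fold_zero x _ (Finset.pairwise_sort _ _) (Finset.sort_nodup _ _) v β ?_
  exact (Finset.mem_sort _).mpr (Finset.mem_filter.mpr ⟨β.2, h⟩)

end PreSkeleton

lemma minExpFrom_le {A : Finset ℝ} (exps : A → ℝ) (hexps : ∀ β, 0 ≤ exps β) (η : ℝ)
    (β : A) (hβ : η ≤ (β:ℝ)) : minExpFrom A exps η ≤ exps β := by
  refine csInf_le ⟨0, ?_⟩ ⟨β, hβ, rfl⟩
  rintro r ⟨β', -, hr⟩
  rw [hr]; exact hexps β'

lemma pdist_nonneg (x y : ℝ × ℝ) : 0 ≤ pdist x y :=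
  add_nonneg (abs_nonneg _) (Real.sqrt_nonneg _)

lemma pdist_eq_zero {x y : ℝ × ℝ} (h : pdist y x = 0) : y = x := by
  unfold pdist at h
  have h1 : |y.1 - x.1| = 0 := by
    nlinarith [abs_nonneg (y.1 - x.1), Real.sqrt_nonneg |y.2 - x.2|]
  have h2 : Real.sqrt |y.2 - x.2| = 0 := by
    nlinarith [abs_nonneg (y.1 - x.1), Real.sqrt_nonneg |y.2 - x.2|]
  have h2' : |y.2 - x.2| = 0 :=
    le_antisymm (Real.sqrt_eq_zero'.mp h2) (abs_nonneg _)
  have e1 : y.1 = x.1 := by have := abs_eq_zero.mp h1; linarith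
  have e2 : y.2 = x.2 := by have := abs_eq_zero.mp h2'; linarith
  exact Prod.ext e1 e2

lemma key_formcont
    {A : Finset ℝ} {Tb : A → Type*}
    [∀ β, NormedAddCommGroup (Tb β)] [∀ β, NormedSpace ℝ (Tb β)]
    (S : PreSkeleton A Tb)
    (N : ℝ) (hN0 : 0 < N) (hN1 : N ≤ 1)
    (exps : A → ℝ) (hexps : ∀ β, 0 ≤ exps β)
    (ord : ℝ) (V : ℝ × ℝ → (∀ γ : A, Tb γ) → ℝ)
    (hlin : ∀ x, IsLinearMap ℝ (V x))
    (βstar : A) (Mstar Mb : ℝ) (hMstar : 0 ≤ Mstar) (hMb : 0 ≤ Mb)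
    (hbd : ∀ (x : ℝ × ℝ) (v : ∀ γ : A, Tb γ),
      |V x v| ≤ Mstar * N ^ exps βstar * ‖S.apply x βstar v‖ +
        Mb * ∑ β : A,
          (if β ≠ βstar then N ^ exps β * ‖S.apply x β v‖ else 0))
    (η : ℝ) (hηstar : (βstar : ℝ) < η)
    (Mc C : ℝ) (hMc0 : 0 ≤ Mc) (hC0 : 0 ≤ C)
    (hMc : S.FormContinuous ord V Mc) (hC : S.IsSkelBound C) :
    S.FormContinuous (min ord η) (S.cutForm η V)
      (Mc + ((A.card - 1 : ℕ) : ℝ) * N ^ minExpFrom A exps η * C * Mb) := by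
  classical
  intro x y v hdle
  simp only [PreSkeleton.cutForm]
  have hd0 : 0 ≤ pdist y x := pdist_nonneg _ _
  have hNm0 : 0 ≤ N ^ minExpFrom A exps η := Real.rpow_nonneg hN0.le _
  have hn0 : (0:ℝ) ≤ ((A.card - 1 : ℕ) : ℝ) := Nat.cast_nonneg _
  have hK0 : 0 ≤ Mc + ((A.card - 1 : ℕ) : ℝ) * N ^ minExpFrom A exps η * C * Mb :=
    add_nonneg hMc0 (mul_nonneg (mul_nonneg (mul_nonneg hn0 hNm0) hC0) hMb)
  have hSvterm : ∀ β : A, 0 ≤ pdist y x ^ max (min ord η - (β:ℝ)) 0 * ‖S.apply x β v‖ :=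
    fun β => mul_nonneg (Real.rpow_nonneg hd0 _) (norm_nonneg _)
  have hSv0 : 0 ≤ ∑ β : A, pdist y x ^ max (min ord η - (β:ℝ)) 0 * ‖S.apply x β v‖ :=
    Finset.sum_nonneg fun β _ => hSvterm β
  rcases eq_or_lt_of_le hd0 with hzero | hdpos
  · have hyx : y = x := pdist_eq_zero hzero.symm
    have hLHS0 : V y (S.cutVec y η v) - V x (S.cutVec x η v) = 0 := by
      rw [hyx, sub_self]
    rw [hLHS0, abs_zero]
    exact mul_nonneg hK0 hSv0
  · have hrpow : ∀ e₁ e₂ : ℝ, e₂ ≤ e₁ → pdist y x ^ e₁ ≤ pdist y x ^ e₂ :=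
      fun e₁ e₂ h => Real.rpow_le_rpow_of_exponent_ge hdpos hdle h
    -- Term 1
    have h1 : |V y (S.cutVec x η v) - V x (S.cutVec x η v)| ≤
        Mc * ∑ β : A, pdist y x ^ max (min ord η - (β:ℝ)) 0 * ‖S.apply x β v‖ := by
      refine le_trans (hMc x y (S.cutVec x η v) hdle) ?_
      refine mul_le_mul_of_nonneg_left (Finset.sum_le_sum fun β _ => ?_) hMc0
      by_cases hβ : η ≤ (β:ℝ)
      · rw [S.apply_cutVec_ge x η v hβ, norm_zero, mul_zero]
        exact hSvterm β
      · rw [S.apply_cutVec_lt x x η v (lt_of_not_ge hβ)]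
        refine mul_le_mul_of_nonneg_right (hrpow _ _ ?_) (norm_nonneg _)
        exact max_le_max (sub_le_sub_right (min_le_left _ _) _) le_rfl
    -- Term 2
    have h2 : |V y (S.cutVec y η v) - V y (S.cutVec x η v)| ≤
        ((A.card - 1 : ℕ) : ℝ) * N ^ minExpFrom A exps η * C * Mb *
          ∑ β : A, pdist y x ^ max (min ord η - (β:ℝ)) 0 * ‖S.apply x β v‖ := by
      have hsub : V y (S.cutVec y η v) - V y (S.cutVec x η v)
          = V y (S.cutVec y η v - S.cutVec x η v) := ((hlin y).map_sub _ _).symm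
      rw [hsub]
      refine le_trans (hbd y _) ?_
      have hstar : S.apply y βstar (S.cutVec y η v - S.cutVec x η v) = 0 := by
        rw [S.apply_sub', S.apply_cutVec_lt y y η v hηstar,
          S.apply_cutVec_lt x y η v hηstar, sub_self]
      rw [hstar, norm_zero, mul_zero, zero_add]
      have hterm : ∀ β : A,
          (if β ≠ βstar then N ^ exps β * ‖S.apply y β (S.cutVec y η v - S.cutVec x η v)‖ else 0)
          ≤ (if η ≤ (β:ℝ) then N ^ minExpFrom A exps η *
              (C * ∑ γ : A, pdist y x ^ max (min ord η - (γ:ℝ)) 0 * ‖S.apply x γ v‖) else 0) := by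
        intro β
        by_cases hβ : η ≤ (β:ℝ)
        · rw [if_pos hβ]
          have hle1 : (if β ≠ βstar then
              N ^ exps β * ‖S.apply y β (S.cutVec y η v - S.cutVec x η v)‖ else 0)
              ≤ N ^ exps β * ‖S.apply y β (S.cutVec y η v - S.cutVec x η v)‖ := by
            split
            · exact le_rfl
            · positivity
          refine le_trans hle1 ?_
          have hnorm : ‖S.apply y β (S.cutVec y η v - S.cutVec x η v)‖
              = ‖S.apply y β (S.cutVec x η v) - S.apply x β (S.cutVec x η v)‖ := by
            rw [S.apply_sub', S.apply_cutVec_ge y η v hβ, S.apply_cutVec_ge x η v hβ,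
              zero_sub, norm_neg, sub_zero]
          have hsum : (∑ γ : A, if (γ:ℝ) < (β:ℝ)
                then pdist y x ^ ((β:ℝ) - (γ:ℝ)) * ‖S.apply x γ (S.cutVec x η v)‖ else 0)
              ≤ ∑ γ : A, pdist y x ^ max (min ord η - (γ:ℝ)) 0 * ‖S.apply x γ v‖ := by
            refine Finset.sum_le_sum fun γ _ => ?_
            by_cases hγβ : (γ:ℝ) < (β:ℝ)
            · rw [if_pos hγβ]
              by_cases hγη : η ≤ (γ:ℝ)
              · rw [S.apply_cutVec_ge x η v hγη, norm_zero, mul_zero]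
                exact hSvterm γ
              · rw [S.apply_cutVec_lt x x η v (lt_of_not_ge hγη)]
                refine mul_le_mul_of_nonneg_right (hrpow _ _ ?_) (norm_nonneg _)
                have hγη' : (γ:ℝ) < η := lt_of_not_ge hγη
                refine max_le ?_ ?_
                · have := min_le_right ord η; linarith
                · linarith
            · rw [if_neg hγβ]; exact hSvterm γ
          have hC' : ‖S.apply y β (S.cutVec y η v - S.cutVec x η v)‖
              ≤ C * ∑ γ : A, pdist y x ^ max (min ord η - (γ:ℝ)) 0 * ‖S.apply x γ v‖ := by
            rw [hnorm]
            exact le_trans (hC β (S.cutVec x η v) x y hdle)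
              (mul_le_mul_of_nonneg_left hsum hC0)
          have hNβ : N ^ exps β ≤ N ^ minExpFrom A exps η :=
            Real.rpow_le_rpow_of_exponent_ge hN0 hN1 (minExpFrom_le exps hexps η β hβ)
          calc N ^ exps β * ‖S.apply y β (S.cutVec y η v - S.cutVec x η v)‖
              ≤ N ^ exps β * (C * ∑ γ : A, pdist y x ^ max (min ord η - (γ:ℝ)) 0 * ‖S.apply x γ v‖) :=
                mul_le_mul_of_nonneg_left hC' (Real.rpow_nonneg hN0.le _)
            _ ≤ N ^ minExpFrom A exps η * (C * ∑ γ : A, pdist y x ^ max (min ord η - (γ:ℝ)) 0 * ‖S.apply x γ v‖) :=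
                mul_le_mul_of_nonneg_right hNβ (mul_nonneg hC0 hSv0)
        · rw [if_neg hβ]
          have hzeroβ : S.apply y β (S.cutVec y η v - S.cutVec x η v) = 0 := by
            rw [S.apply_sub', S.apply_cutVec_lt y y η v (lt_of_not_ge hβ),
              S.apply_cutVec_lt x y η v (lt_of_not_ge hβ), sub_self]
          rw [hzeroβ, norm_zero]
          split <;> simp
      have hcard : (Finset.univ.filter fun β : A => η ≤ (β:ℝ)).card ≤ A.card - 1 := by
        have hsub : (Finset.univ.filter fun β : A => η ≤ (β:ℝ)) ⊆ Finset.univ.erase βstar := by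
          intro β hβmem
          rw [Finset.mem_erase]
          refine ⟨fun hcon => ?_, Finset.mem_univ _⟩
          have := (Finset.mem_filter.mp hβmem).2
          rw [hcon] at this
          linarith
        calc (Finset.univ.filter fun β : A => η ≤ (β:ℝ)).card
            ≤ (Finset.univ.erase βstar).card := Finset.card_le_card hsub
          _ = Fintype.card A - 1 := by
              rw [Finset.card_erase_of_mem (Finset.mem_univ _), Finset.card_univ]
          _ = A.card - 1 := by rw [Fintype.card_coe]
      have hsumall : (∑ β : A, if β ≠ βstar then
            N ^ exps β * ‖S.apply y β (S.cutVec y η v - S.cutVec x η v)‖ else 0)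
          ≤ ((A.card - 1 : ℕ) : ℝ) * (N ^ minExpFrom A exps η *
              (C * ∑ γ : A, pdist y x ^ max (min ord η - (γ:ℝ)) 0 * ‖S.apply x γ v‖)) := by
        refine le_trans (Finset.sum_le_sum fun β _ => hterm β) ?_
        rw [← Finset.sum_filter, Finset.sum_const, nsmul_eq_mul]
        refine mul_le_mul_of_nonneg_right (Nat.cast_le.mpr hcard) ?_
        exact mul_nonneg hNm0 (mul_nonneg hC0 hSv0)
      calc Mb * (∑ β : A, if β ≠ βstar then
            N ^ exps β * ‖S.apply y β (S.cutVec y η v - S.cutVec x η v)‖ else 0)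
          ≤ Mb * (((A.card - 1 : ℕ) : ℝ) * (N ^ minExpFrom A exps η *
              (C * ∑ γ : A, pdist y x ^ max (min ord η - (γ:ℝ)) 0 * ‖S.apply x γ v‖))) :=
            mul_le_mul_of_nonneg_left hsumall hMb
        _ = ((A.card - 1 : ℕ) : ℝ) * N ^ minExpFrom A exps η * C * Mb *
              ∑ β : A, pdist y x ^ max (min ord η - (β:ℝ)) 0 * ‖S.apply x β v‖ := by ring
    calc |V y (S.cutVec y η v) - V x (S.cutVec x η v)|
        = |(V y (S.cutVec x η v) - V x (S.cutVec x η v))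
            + (V y (S.cutVec y η v) - V y (S.cutVec x η v))| := by ring_nf
      _ ≤ |V y (S.cutVec x η v) - V x (S.cutVec x η v)|
            + |V y (S.cutVec y η v) - V y (S.cutVec x η v)| := abs_add_le _ _
      _ ≤ Mc * (∑ β : A, pdist y x ^ max (min ord η - (β:ℝ)) 0 * ‖S.apply x β v‖)
            + ((A.card - 1 : ℕ) : ℝ) * N ^ minExpFrom A exps η * C * Mb *
              ∑ β : A, pdist y x ^ max (min ord η - (β:ℝ)) 0 * ‖S.apply x β v‖ :=
            add_le_add h1 h2
      _ = (Mc + ((A.card - 1 : ℕ) : ℝ) * N ^ minExpFrom A exps η * C * Mb) *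
              ∑ β : A, pdist y x ^ max (min ord η - (β:ℝ)) 0 * ‖S.apply x β v‖ := by ring
/-- **Improved reduction bound.** -/
theorem improved_reduction_bound
    {A : Finset ℝ} {Tb : A → Type*}
    [∀ β, NormedAddCommGroup (Tb β)] [∀ β, NormedSpace ℝ (Tb β)]
    (S : PreSkeleton A Tb) (hS : S.IsSkeleton) (hA : A.Nonempty)
    (N : ℝ) (hN0 : 0 < N) (hN1 : N ≤ 1)
    (exps : A → ℝ) (hexps : ∀ β, 0 ≤ exps β)
    (ord : ℝ) (V : ℝ × ℝ → (∀ γ : A, Tb γ) → ℝ) (hV : S.IsModelled ord V)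
    (βstar : A) (Mstar Mb : ℝ) (hMstar : 0 ≤ Mstar) (hMb : 0 ≤ Mb)
    (hbd : ∀ (x : ℝ × ℝ) (v : ∀ γ : A, Tb γ),
      |V x v| ≤ Mstar * N ^ exps βstar * ‖S.apply x βstar v‖ +
        Mb * ∑ β : A,
          (if β ≠ βstar then N ^ exps β * ‖S.apply x β v‖ else 0))
    (η : ℝ) (hηstar : (βstar : ℝ) < η) (hη₁ : A.min' hA < η) (hη₂ : η ≤ A.max' hA) :
    S.ctyNorm (min ord η) (S.cutForm η V) ≤
      S.ctyNorm ord V +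
        ((A.card - 1 : ℕ) : ℝ) * N ^ minExpFrom A exps η * S.skelNorm * Mb := by
  classical
  obtain ⟨hlin, -, -, Mc0, hMc00, hMc0⟩ := hV
  have hctyne : {Mc | 0 ≤ Mc ∧ S.FormContinuous ord V Mc}.Nonempty := ⟨Mc0, hMc00, hMc0⟩
  have hskne : {C | 0 ≤ C ∧ S.IsSkelBound C}.Nonempty := by
    obtain ⟨C, hC0, hC⟩ := hS
    exact ⟨C, hC0, hC⟩
  have hsk0 : 0 ≤ S.skelNorm := le_csInf hskne fun c hc => hc.1
  have hcty0 : 0 ≤ S.ctyNorm ord V := le_csInf hctyne fun c hc => hc.1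
  have hn0 : (0:ℝ) ≤ ((A.card - 1 : ℕ) : ℝ) := Nat.cast_nonneg _
  have hNm0 : 0 ≤ N ^ minExpFrom A exps η := Real.rpow_nonneg hN0.le _
  set D : ℝ := 1 + ((A.card - 1 : ℕ) : ℝ) * N ^ minExpFrom A exps η * Mb with hD
  have hD0 : 0 < D := by
    have : 0 ≤ ((A.card - 1 : ℕ) : ℝ) * N ^ minExpFrom A exps η * Mb :=
      mul_nonneg (mul_nonneg hn0 hNm0) hMb
    rw [hD]; linarith
  refine le_of_forall_pos_le_add fun ε hε => ?_
  have hδ : 0 < ε / D := div_pos hε hD0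
  obtain ⟨Mc, hMcmem, hMclt⟩ := Real.lt_sInf_add_pos hctyne hδ
  obtain ⟨C, hCmem, hClt⟩ := Real.lt_sInf_add_pos hskne hδ
  have hkey := key_formcont S N hN0 hN1 exps hexps ord V hlin βstar Mstar Mb hMstar hMb
    hbd η hηstar Mc C hMcmem.1 hCmem.1 hMcmem.2 hCmem.2
  have hK0 : 0 ≤ Mc + ((A.card - 1 : ℕ) : ℝ) * N ^ minExpFrom A exps η * C * Mb :=
    add_nonneg hMcmem.1 (mul_nonneg (mul_nonneg (mul_nonneg hn0 hNm0) hCmem.1) hMb)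
  have hLHS : S.ctyNorm (min ord η) (S.cutForm η V)
      ≤ Mc + ((A.card - 1 : ℕ) : ℝ) * N ^ minExpFrom A exps η * C * Mb :=
    csInf_le ⟨0, fun c hc => hc.1⟩ ⟨hK0, hkey⟩
  have hMc' : Mc ≤ S.ctyNorm ord V + ε / D := le_of_lt hMclt
  have hC' : C ≤ S.skelNorm + ε / D := le_of_lt hClt
  calc S.ctyNorm (min ord η) (S.cutForm η V)
      ≤ Mc + ((A.card - 1 : ℕ) : ℝ) * N ^ minExpFrom A exps η * C * Mb := hLHS
    _ ≤ (S.ctyNorm ord V + ε / D) + ((A.card - 1 : ℕ) : ℝ) * N ^ minExpFrom A exps η *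
          (S.skelNorm + ε / D) * Mb :=
        add_le_add hMc'
          (mul_le_mul_of_nonneg_right
            (mul_le_mul_of_nonneg_left hC' (mul_nonneg hn0 hNm0)) hMb)
    _ = S.ctyNorm ord V + ((A.card - 1 : ℕ) : ℝ) * N ^ minExpFrom A exps η * S.skelNorm * Mb
          + (ε / D) * D := by rw [hD]; ring
    _ = S.ctyNorm ord V + ((A.card - 1 : ℕ) : ℝ) * N ^ minExpFrom A exps η * S.skelNorm * Mb
          + ε := by rw [div_mul_cancel₀ _ (ne_of_gt hD0)]
end
end

section
/- Reductions act as projections: Let (A,T) be an abstract space with skeleton Γ, and let V ∈ C⁰(ℝ²;T*) satisfy form boundedness; since each Γ(x) is invertible by the triangular structure, Ṽ(x) := Γ^{−*}(x)V(x) ∈ T* satisfies V(x).v = Ṽ(x).(Γ(x)v). Then for every η with β̲ < η ≤ β̄ the reduction is a restriction in terms of Ṽ: C_ηV(x).v = Σ_{β∈A, β<η} Ṽ_β(x).(Γ(x)v)_β for all x ∈ ℝ² and v ∈ T, where Ṽ_β denotes the component of Ṽ in T_β*. Consequently, for all β̲ < η ≤ η' ≤ β̄ one has C_η C_{η'} =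 C_{η'} C_η = C_η. -/
open scoped BigOperators
open MeasureTheory

noncomputable section

namespace PreSkeleton

variable {A : Finset ℝ} {Tb : A → Type*}
  [∀ β, NormedAddCommGroup (Tb β)] [∀ β, NormedSpace ℝ (Tb β)]
  (S : PreSkeleton A Tb)

lemma apply_cutStep_of_lt (x : ℝ × ℝ) (b : ℝ) (v : ∀ γ : A, Tb γ) (β : A)
    (hb : (β : ℝ) < b) : S.apply x β (S.cutStep x b v) = S.apply x β v := by
  unfold apply cutStep
  refine Finset.sum_congr rfl fun γ _ => ?_
  by_cases h : (γ : ℝ) = b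
  · have h0 : S.mat x β γ = 0 := S.upper x β γ (by rw [h]; exact hb)
    simp [h0]
  · simp [h]

lemma apply_cutStep_self (x : ℝ × ℝ) (v : ∀ γ : A, Tb γ) (β : A) :
    S.apply x β (S.cutStep x (β : ℝ) v) = 0 := by
  unfold cutStep
  have key : S.apply x β (fun γ => v γ - if (γ : ℝ) = (β : ℝ) then S.apply x γ v else 0)
      = S.apply x β v - ∑ γ : A, (if γ = β then S.mat x β γ (S.apply x γ v) else 0) := by
    unfold apply
    rw [← Finset.sum_sub_distrib]
    refine Finset.sum_congr rfl fun γ _ => ?_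
    rw [map_sub]
    congr 1
    rw [apply_ite (S.mat x β γ), map_zero]
    congr 1
    simp [Subtype.coe_inj]
  rw [key, Finset.sum_ite_eq' Finset.univ β, if_pos (Finset.mem_univ β), S.diag]
  simp

lemma apply_foldl_of_forall_lt (x : ℝ × ℝ) : ∀ (l : List ℝ) (v : ∀ γ : A, Tb γ) (β : A),
    (∀ b ∈ l, (β : ℝ) < b) →
    S.apply x β (l.foldl (fun w b => S.cutStep x b w) v) = S.apply x β v := by
  intro l
  induction l with
  | nil => intro v β _; rfl
  | cons b l ih =>
    intro v β h
    simp only [List.foldl_cons]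
    rw [ih _ β (fun b' hb' => h b' (List.mem_cons_of_mem _ hb'))]
    exact S.apply_cutStep_of_lt x b v β (h b List.mem_cons_self)

lemma apply_foldl_of_mem (x : ℝ × ℝ) : ∀ (l : List ℝ), l.Pairwise (· < ·) →
    ∀ (v : ∀ γ : A, Tb γ) (β : A), (β : ℝ) ∈ l →
    S.apply x β (l.foldl (fun w b => S.cutStep x b w) v) = 0 := by
  intro l
  induction l with
  | nil => simp
  | cons b l ih =>
    intro hs v β hβ
    simp only [List.foldl_cons]
    rcases List.mem_cons.1 hβ with h | h
    · rw [S.apply_foldl_of_forall_lt x l _ β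
        (fun b' hb' => h ▸ (List.pairwise_cons.1 hs).1 b' hb')]
      rw [show S.cutStep x b v = S.cutStep x (β : ℝ) v by rw [h]]
      exact S.apply_cutStep_self x v β
    · exact ih (List.pairwise_cons.1 hs).2 _ β h

lemma apply_cutVec (x : ℝ × ℝ) (η : ℝ) (v : ∀ γ : A, Tb γ) (β : A) :
    S.apply x β (S.cutVec x η v) = if (β : ℝ) < η then S.apply x β v else 0 := by
  unfold cutVec
  by_cases h : (β : ℝ) < η
  · rw [if_pos h]
    refine S.apply_foldl_of_forall_lt x _ v β fun b hb => ?_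
    have hb' := Finset.mem_filter.1 ((Finset.mem_sort _).1 hb)
    exact lt_of_lt_of_le h hb'.2
  · rw [if_neg h]
    refine S.apply_foldl_of_mem x _ (Finset.sortedLT_sort _).pairwise v β ?_
    exact (Finset.mem_sort _).2 (Finset.mem_filter.2 ⟨β.2, not_lt.1 h⟩)

lemma cutForm_repr (V : ℝ × ℝ → (∀ γ : A, Tb γ) → ℝ)
    (W : ℝ × ℝ → ∀ β : A, Tb β → ℝ) (hWlin : ∀ x β, IsLinearMap ℝ (W x β))
    (hW : ∀ x v, V x v = ∑ β : A, W x β (S.apply x β v)) (η : ℝ) (x : ℝ × ℝ)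
    (v : ∀ γ : A, Tb γ) :
    S.cutForm η V x v = ∑ β : A, (if (β : ℝ) < η then W x β (S.apply x β v) else 0) := by
  unfold cutForm
  rw [hW]
  refine Finset.sum_congr rfl fun β _ => ?_
  rw [S.apply_cutVec]
  by_cases h : (β : ℝ) < η
  · simp [h]
  · simp [h, (hWlin x β).map_zero]

/-- `Γ(x)` as a linear endomorphism of `T`. -/
def applyFullL (x : ℝ × ℝ) : Module.End ℝ (∀ γ : A, Tb γ) where
  toFun v := fun β => S.apply x β v
  map_add' v w := by
    funext β
    simp [apply, Finset.sum_add_distrib]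
  map_smul' c v := by
    funext β
    simp [apply, Finset.smul_sum]

/-- The strictly triangular part `Γ(x) - id`. -/
def nilPart (x : ℝ × ℝ) : Module.End ℝ (∀ γ : A, Tb γ) := S.applyFullL x - 1

lemma nilPart_apply_eq_zero (x : ℝ × ℝ) (v : ∀ γ : A, Tb γ) (β : A)
    (h : ∀ γ : A, (γ : ℝ) < (β : ℝ) → v γ = 0) : (S.nilPart x) v β = 0 := by
  have h1 : (S.nilPart x) v β = S.apply x β v - v β := by
    simp [nilPart, applyFullL, LinearMap.sub_apply]
  rw [h1, sub_eq_zero]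
  unfold apply
  rw [Finset.sum_eq_single β]
  · rw [S.diag]; rfl
  · intro γ _ hne
    rcases lt_trichotomy ((γ : ℝ)) ((β : ℝ)) with hlt | heq | hgt
    · rw [h γ hlt, map_zero]
    · exact absurd (Subtype.coe_inj.1 heq) hne
    · rw [S.upper x β γ hgt]; rfl
  · intro hβ; exact absurd (Finset.mem_univ β) hβ

/-- Rank of a level. -/
def rk (β : A) : ℕ := (A.filter (fun g => g < (β : ℝ))).card

lemma rk_lt_rk {γ β : A} (h : (γ : ℝ) < (β : ℝ)) : rk γ < rk β := by
  apply Finset.card_lt_card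
  rw [Finset.ssubset_def]
  refine ⟨fun g hg => ?_, fun hc => ?_⟩
  · rw [Finset.mem_filter] at hg ⊢
    exact ⟨hg.1, lt_trans hg.2 h⟩
  · have := hc (Finset.mem_filter.2 ⟨γ.2, h⟩)
    exact lt_irrefl _ (Finset.mem_filter.1 this).2

lemma tri_pow (E : Module.End ℝ (∀ γ : A, Tb γ))
    (hE : ∀ (v : ∀ γ : A, Tb γ) (β : A), (∀ γ : A, (γ : ℝ) < (β : ℝ) → v γ = 0) → E v β = 0) :
    ∀ (k : ℕ) (v : ∀ γ : A, Tb γ) (β : A), rk β < k → (E ^ k) v β = 0 := by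
  intro k
  induction k with
  | zero => intro v β hk; exact absurd hk (Nat.not_lt_zero _)
  | succ k ih =>
    intro v β hk
    rw [pow_succ']
    refine hE _ β fun γ hγ => ?_
    exact ih v γ (lt_of_lt_of_le (rk_lt_rk hγ) (Nat.lt_succ_iff.1 hk))

lemma tri_pow_card (E : Module.End ℝ (∀ γ : A, Tb γ))
    (hE : ∀ (v : ∀ γ : A, Tb γ) (β : A), (∀ γ : A, (γ : ℝ) < (β : ℝ) → v γ = 0) → E v β = 0) :
    E ^ A.card = 0 := by
  refine LinearMap.ext fun v => funext fun β => ?_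
  simp only [LinearMap.zero_apply, Pi.zero_apply]
  refine tri_pow E hE _ v β ?_
  exact Finset.card_lt_card (Finset.filter_ssubset.2 ⟨(β : ℝ), β.2, lt_irrefl _⟩)

/-- The inverse `Γ(x)⁻¹` as a Neumann series. -/
def invFullL (x : ℝ × ℝ) : Module.End ℝ (∀ γ : A, Tb γ) :=
  ∑ i ∈ Finset.range A.card, (-(S.nilPart x)) ^ i

lemma invFullL_mul (x : ℝ × ℝ) : (S.invFullL x) * (S.applyFullL x) = 1 := by
  have h1 : S.applyFullL x = S.nilPart x + 1 := by rw [nilPart]; abel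
  have h3 : (-(S.nilPart x)) ^ A.card = 0 := by
    refine tri_pow_card _ fun v β h => ?_
    rw [show ((-(S.nilPart x)) v) β = -((S.nilPart x) v β) from rfl,
      S.nilPart_apply_eq_zero x v β h, neg_zero]
  have h2 := geom_sum_mul_neg (-(S.nilPart x)) A.card
  rw [h3, sub_zero, sub_neg_eq_add] at h2
  rw [h1, add_comm (S.nilPart x) (1 : Module.End ℝ (∀ γ : A, Tb γ))]
  exact h2

lemma invFullL_apply (x : ℝ × ℝ) (v : ∀ γ : A, Tb γ) :
    S.invFullL x (S.applyFullL x v) = v := by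
  have := LinearMap.ext_iff.1 (S.invFullL_mul x) v
  rwa [Module.End.mul_apply, Module.End.one_apply] at this

end PreSkeleton

/-- **Reductions act as projections.** -/
theorem reductions_act_as_projections
    {A : Finset ℝ} {Tb : A → Type*}
    [∀ β, NormedAddCommGroup (Tb β)] [∀ β, NormedSpace ℝ (Tb β)]
    (S : PreSkeleton A Tb) (hS : S.IsSkeleton) (hA : A.Nonempty)
    (V : ℝ × ℝ → (∀ γ : A, Tb γ) → ℝ)
    (hlin : ∀ x, IsLinearMap ℝ (V x)) (hcont : ∀ v, Continuous fun x => V x v)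
    (hbd : ∃ Mb : A → ℝ, (∀ β, 0 ≤ Mb β) ∧ S.FormBounded V Mb) :
    (∃ W : ℝ × ℝ → ∀ β : A, Tb β → ℝ,
      (∀ x β, IsLinearMap ℝ (W x β)) ∧
      ∀ (x : ℝ × ℝ) (v : ∀ γ : A, Tb γ),
        V x v = ∑ β : A, W x β (S.apply x β v)) ∧
    (∀ W : ℝ × ℝ → ∀ β : A, Tb β → ℝ,
      (∀ x β, IsLinearMap ℝ (W x β)) →
      (∀ (x : ℝ × ℝ) (v : ∀ γ : A, Tb γ),
        V x v = ∑ β : A, W x β (S.apply x β v)) →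
      ∀ η : ℝ, A.min' hA < η → η ≤ A.max' hA →
        ∀ (x : ℝ × ℝ) (v : ∀ γ : A, Tb γ),
          S.cutForm η V x v =
            ∑ β : A, (if (β : ℝ) < η then W x β (S.apply x β v) else 0)) ∧
    (∀ η η' : ℝ, A.min' hA < η → η ≤ η' → η' ≤ A.max' hA →
      S.cutForm η (S.cutForm η' V) = S.cutForm η V ∧
      S.cutForm η' (S.cutForm η V) = S.cutForm η V) := by
  classical
  obtain ⟨W₀, hW₀lin, hW₀⟩ :
      ∃ W : ℝ × ℝ → ∀ β : A, Tb β → ℝ,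
        (∀ x β, IsLinearMap ℝ (W x β)) ∧
        ∀ (x : ℝ × ℝ) (v : ∀ γ : A, Tb γ),
          V x v = ∑ β : A, W x β (S.apply x β v) := by
    refine ⟨fun x β u => V x (S.invFullL x (Pi.single β u)), fun x β => ?_, fun x v => ?_⟩
    · constructor
      · intro u u'
        rw [← (hlin x).map_add, ← (S.invFullL x).map_add, ← Pi.single_add]
      · intro c u
        rw [← (hlin x).map_smul, ← (S.invFullL x).map_smul, ← Pi.single_smul]
    · have hL : V x = ⇑(IsLinearMap.mk' (V x) (hlin x)) := rfl
      have key : ∑ β : A, V x (S.invFullL x (Pi.single β (S.apply x β v))) = V x v := by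
        rw [hL, ← map_sum, ← map_sum,
          show (∑ β : A, Pi.single β (S.apply x β v)) = S.applyFullL x v from
            Finset.univ_sum_single (S.applyFullL x v),
          S.invFullL_apply]
      exact key.symm
  have hrepr := S.cutForm_repr V W₀ hW₀lin hW₀
  refine ⟨⟨W₀, hW₀lin, hW₀⟩, ?_, ?_⟩
  · intro W hWlin hW η _ _ x v
    exact S.cutForm_repr V W hWlin hW η x v
  · intro η η' hη hηη' hη'
    have zerolin : ∀ β : A, IsLinearMap ℝ (0 : Tb β → ℝ) :=
      fun β => ⟨fun a b => by simp, fun c a => by simp⟩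
    constructor
    · have hW'lin : ∀ (x : ℝ × ℝ) (β : A),
          IsLinearMap ℝ (if (β : ℝ) < η' then W₀ x β else 0) := by
        intro x β
        by_cases h : (β : ℝ) < η'
        · simpa [h] using hW₀lin x β
        · simpa [h] using zerolin β
      have hW' : ∀ (x : ℝ × ℝ) (v : ∀ γ : A, Tb γ),
          S.cutForm η' V x v
            = ∑ β : A, (if (β : ℝ) < η' then W₀ x β else 0) (S.apply x β v) := by
        intro x v
        rw [hrepr η' x v]
        refine Finset.sum_congr rfl fun β _ => ?_
        by_cases h : (β : ℝ) < η' <;> simp [h]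
      funext x v
      rw [S.cutForm_repr _ _ hW'lin hW' η x v, hrepr η x v]
      refine Finset.sum_congr rfl fun β _ => ?_
      by_cases h : (β : ℝ) < η
      · simp [h, lt_of_lt_of_le h hηη']
      · simp [h]
    · have hW''lin : ∀ (x : ℝ × ℝ) (β : A),
          IsLinearMap ℝ (if (β : ℝ) < η then W₀ x β else 0) := by
        intro x β
        by_cases h : (β : ℝ) < η
        · simpa [h] using hW₀lin x β
        · simpa [h] using zerolin β
      have hW'' : ∀ (x : ℝ × ℝ) (v : ∀ γ : A, Tb γ),
          S.cutForm η V x v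
            = ∑ β : A, (if (β : ℝ) < η then W₀ x β else 0) (S.apply x β v) := by
        intro x v
        rw [hrepr η x v]
        refine Finset.sum_congr rfl fun β _ => ?_
        by_cases h : (β : ℝ) < η <;> simp [h]
      funext x v
      rw [S.cutForm_repr _ _ hW''lin hW'' η' x v, hrepr η x v]
      refine Finset.sum_congr rfl fun β _ => ?_
      by_cases h : (β : ℝ) < η
      · simp [h, lt_of_lt_of_le h hηη']
      · by_cases h2 : (β : ℝ) < η' <;> simp [h, h2]
end
end
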